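/- arXiv:0906.0434 — 7 statements merged into one kernel-verified Lean document; each statement's English description precedes it below -/
import Mathlib

section
/- Suppose y1 ≥ y2 and y1 − y2 > aλ. Then (θ1, θ2) = (y1, y2) is the unique global minimizer over ℝ² of the two-pixel SCAD objective Q(θ1, θ2) = (y1 − θ1)² + (y2 − θ2)² + p_λ(|θ1 − θ2|). -/
/-- The SCAD penalty function `p_λ` with parameters `a` and `lam = λ`. -/
noncomputable def scadPen (a lam θ : ℝ) : ℝ :=
  if θ ≤ lam then lam * θ
  else if θ ≤ a * lam then (2 * a * lam * θ - θ ^ 2 - lam ^ 2) / (2 * (a - 1))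
  else (a + 1) * lam ^ 2 / 2

/-- The derivative `p'_λ` of the SCAD penalty (with the convention `p'_λ(0) = λ`). -/
noncomputable def scadDeriv (a lam θ : ℝ) : ℝ :=
  if θ ≤ lam then lam
  else if θ ≤ a * lam then (a * lam - θ) / (a - 1)
  else 0

/-- The two-pixel SCAD objective `Q(θ1, θ2)`. -/
noncomputable def scadQ (a lam y1 y2 θ1 θ2 : ℝ) : ℝ :=
  (y1 - θ1) ^ 2 + (y2 - θ2) ^ 2 + scadPen a lam |θ1 - θ2|

/-- The SCAD penalty never exceeds its cap `(a+1)λ²/2`, and the deficit is at most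
`(max (aλ - t) 0)² / (2(a-1))`. -/
lemma scadPen_deficit_le (a lam t : ℝ) (ha : 2 < a) (hlam : 0 < lam) (ht : 0 ≤ t) :
    (a + 1) * lam ^ 2 / 2 - scadPen a lam t ≤ (max (a * lam - t) 0) ^ 2 / (2 * (a - 1)) := by
  have ha1 : (0:ℝ) < a - 1 := by linarith
  have h2a1 : (0:ℝ) < 2 * (a - 1) := by linarith
  unfold scadPen
  split_ifs with h1 h2
  · -- t ≤ lam
    have hmax : max (a * lam - t) 0 = a * lam - t := by
      apply max_eq_left; nlinarith
    rw [hmax, le_div_iff₀ h2a1]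
    nlinarith [sq_nonneg (t - lam)]
  · -- lam < t ≤ a*lam
    have hmax : max (a * lam - t) 0 = a * lam - t := by
      apply max_eq_left; linarith
    rw [hmax]
    have heq : (a + 1) * lam ^ 2 / 2 - (2 * a * lam * t - t ^ 2 - lam ^ 2) / (2 * (a - 1))
        = (a * lam - t) ^ 2 / (2 * (a - 1)) := by
      field_simp
      ring
    rw [heq]
  · -- t > a*lam
    have hmax : max (a * lam - t) 0 = 0 := by
      apply max_eq_right; linarith
    rw [hmax]
    norm_num

/-- If `y1 ≥ y2` and `y1 − y2 > aλ`, then `(y1, y2)` is the unique global minimizer of the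
two-pixel SCAD objective `Q`. -/
theorem scad_two_pixel_large_gap_minimizer
    (a lam y1 y2 : ℝ) (ha : 2 < a) (hlam : 0 < lam)
    (hy : y2 ≤ y1) (hgap : a * lam < y1 - y2) :
    ∀ θ1 θ2 : ℝ, (θ1, θ2) ≠ (y1, y2) →
      scadQ a lam y1 y2 y1 y2 < scadQ a lam y1 y2 θ1 θ2 := by
  intro θ1 θ2 hne
  have ha1 : (0:ℝ) < a - 1 := by linarith
  have halam : (0:ℝ) < a * lam := by nlinarith
  -- value at the minimizer
  have hP : scadQ a lam y1 y2 y1 y2 = (a + 1) * lam ^ 2 / 2 := by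
    have habs : |y1 - y2| = y1 - y2 := abs_of_nonneg (by linarith)
    unfold scadQ scadPen
    rw [habs, if_neg (by nlinarith), if_neg (by linarith)]
    ring
  obtain ⟨u, hu⟩ : ∃ u, u = y1 - θ1 := ⟨_, rfl⟩
  obtain ⟨v, hv⟩ : ∃ v, v = y2 - θ2 := ⟨_, rfl⟩
  obtain ⟨t, htdef⟩ : ∃ t, t = |θ1 - θ2| := ⟨_, rfl⟩
  have huv2 : 0 < u ^ 2 + v ^ 2 := by
    rcases eq_or_ne u 0 with h1 | h1
    · rcases eq_or_ne v 0 with h2 | h2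
      · exfalso
        apply hne
        have e1 : θ1 = y1 := by rw [h1] at hu; linarith
        have e2 : θ2 = y2 := by rw [h2] at hv; linarith
        rw [e1, e2]
      · have hv2 : 0 < v ^ 2 := by
          have := abs_pos.mpr h2
          nlinarith [sq_abs v]
        nlinarith [sq_nonneg u]
    · have hu2 : 0 < u ^ 2 := by
        have := abs_pos.mpr h1
        nlinarith [sq_abs u]
      nlinarith [sq_nonneg v]
  have ht0 : 0 ≤ t := htdef ▸ abs_nonneg _
  -- t ≥ (y1 - y2) - |u| - |v|
  have hkey : y1 - y2 ≤ t + |u| + |v| := by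
    calc y1 - y2 = (θ1 - θ2) + u + (-v) := by rw [hu, hv]; ring
      _ ≤ |(θ1 - θ2) + u + (-v)| := le_abs_self _
      _ ≤ |(θ1 - θ2) + u| + |(-v)| := abs_add_le _ _
      _ ≤ (|θ1 - θ2| + |u|) + |(-v)| := by linarith [abs_add_le (θ1 - θ2) u]
      _ = t + |u| + |v| := by rw [abs_neg, htdef]
  have hdef := scadPen_deficit_le a lam t ha hlam ht0
  have hQ : scadQ a lam y1 y2 θ1 θ2 = u ^ 2 + v ^ 2 + scadPen a lam t := by
    unfold scadQ
    rw [hu, hv, htdef]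
  have habsu : |u| ^ 2 = u ^ 2 := sq_abs u
  have habsv : |v| ^ 2 = v ^ 2 := sq_abs v
  rw [hP, hQ]
  rcases le_or_gt (a * lam) t with hc | hc
  · have hz : max (a * lam - t) 0 = 0 := max_eq_right (by linarith)
    rw [hz] at hdef
    norm_num at hdef
    linarith
  · have hmax : max (a * lam - t) 0 = a * lam - t := max_eq_left (by linarith)
    rw [hmax] at hdef
    have h1 : a * lam - t < |u| + |v| := by linarith
    have h2 : 0 ≤ a * lam - t := by linarith
    have h3 : (a * lam - t) ^ 2 < (|u| + |v|) ^ 2 := by nlinarith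
    have h4 : (|u| + |v|) ^ 2 ≤ 2 * (u ^ 2 + v ^ 2) := by
      nlinarith [sq_nonneg (|u| - |v|)]
    have h5 : (a * lam - t) ^ 2 / (2 * (a - 1)) < u ^ 2 + v ^ 2 := by
      rw [div_lt_iff₀ (by linarith : (0:ℝ) < 2 * (a - 1))]
      nlinarith
    linarith
end

section
/- Suppose y1 ≥ y2 and y1 − y2 < λ (note that λ equals the minimum over ξ ∈ ℝ of |ξ| + p'_λ(|ξ|)). Then (θ1, θ2) = ((y1 + y2)/2, (y1 + y2)/2) is the unique global minimizer over ℝ² of the two-pixel SCAD objective Q(θ1, θ2) = (y1 − θ1)² + (y2 − θ2)² + p_λ(|θ1 − θ2|). -/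
lemma scadPen_key (a lam d s : ℝ) (ha : 2 < a) (hlam : 0 < lam)
    (hd0 : 0 ≤ d) (hd : d < lam) (hs : s ≠ 0) :
    d * s - s ^ 2 / 2 < scadPen a lam |s| := by
  rcases lt_or_gt_of_ne hs with h | h
  · rw [abs_of_neg h]
    unfold scadPen
    have h1 : d * s ≤ 0 := mul_nonpos_of_nonneg_of_nonpos hd0 h.le
    split_ifs with h2 h3
    · nlinarith [mul_pos hlam (neg_pos.mpr h), sq_nonneg s]
    · have ha1 : (0:ℝ) < 2 * (a - 1) := by linarith
      rw [lt_div_iff₀ ha1]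
      push_neg at h2
      nlinarith [mul_pos hlam (neg_pos.mpr h), sq_nonneg s, sq_nonneg (s + lam),
        mul_pos (mul_pos hlam (neg_pos.mpr h)) (show (0:ℝ) < a - 1 by linarith)]
    · nlinarith [sq_nonneg s, mul_pos hlam hlam]
  · rw [abs_of_pos h]
    unfold scadPen
    have hds : d * s < lam * s := by nlinarith
    split_ifs with h2 h3
    · nlinarith [sq_nonneg s]
    · have ha1 : (0:ℝ) < 2 * (a - 1) := by linarith
      rw [lt_div_iff₀ ha1]
      push_neg at h2
      nlinarith [mul_lt_mul_of_pos_right hd h, mul_pos hlam h, sq_nonneg s,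
        mul_pos (mul_pos hlam h) (show (0:ℝ) < a - 2 by linarith),
        mul_lt_mul_of_pos_left h2 hlam]
    · nlinarith [sq_nonneg (s - lam), mul_pos hlam hlam]

/-- If `y1 ≥ y2` and `y1 − y2 < λ`, then `((y1+y2)/2, (y1+y2)/2)` is the unique global
minimizer of the two-pixel SCAD objective `Q`. -/
theorem scad_two_pixel_small_gap_minimizer
    (a lam y1 y2 : ℝ) (ha : 2 < a) (hlam : 0 < lam)
    (hy : y2 ≤ y1) (hgap : y1 - y2 < lam) :
    ∀ θ1 θ2 : ℝ, (θ1, θ2) ≠ ((y1 + y2) / 2, (y1 + y2) / 2) →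
      scadQ a lam y1 y2 ((y1 + y2) / 2) ((y1 + y2) / 2) < scadQ a lam y1 y2 θ1 θ2 := by
  intro θ1 θ2 hne
  have hpen0 : scadPen a lam |((y1 + y2) / 2 : ℝ) - (y1 + y2) / 2| = 0 := by
    simp [scadPen, hlam.le]
  unfold scadQ
  rw [hpen0]
  by_cases hs : θ1 = θ2
  · subst hs
    have hθ : θ1 ≠ (y1 + y2) / 2 := by
      intro h; exact hne (by simp [h])
    have hpen : scadPen a lam |θ1 - θ1| = 0 := by simp [scadPen, hlam.le]
    rw [hpen]
    have : (θ1 - (y1 + y2) / 2) ≠ 0 := sub_ne_zero.mpr hθ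
    nlinarith [pow_pos (abs_pos.mpr this) 2, sq_abs (θ1 - (y1+y2)/2)]
  · have key := scadPen_key a lam (y1 - y2) (θ1 - θ2) ha hlam (by linarith) hgap
      (sub_ne_zero.mpr hs)
    nlinarith [sq_nonneg (y1 + y2 - θ1 - θ2)]
end

section
/- Suppose y1 ≥ y2 and y1 − y2 > λ. Then (θ1, θ2) = (y1 − λ/2, y2 + λ/2) is the unique global minimizer over ℝ² of the two-pixel TV objective Q_TV(θ1, θ2) = (y1 − θ1)² + (y2 − θ2)² + λ|θ1 − θ2|. -/
/-- The two-pixel TV objective `Q_TV(θ1, θ2)`. -/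
noncomputable def tvQ (lam y1 y2 θ1 θ2 : ℝ) : ℝ :=
  (y1 - θ1) ^ 2 + (y2 - θ2) ^ 2 + lam * |θ1 - θ2|

/-- If `y1 ≥ y2` and `y1 − y2 > λ`, then `(y1 − λ/2, y2 + λ/2)` is the unique global
minimizer of the two-pixel TV objective `Q_TV`. -/
theorem tv_two_pixel_large_gap_minimizer
    (lam y1 y2 : ℝ) (hlam : 0 < lam)
    (hy : y2 ≤ y1) (hgap : lam < y1 - y2) :
    ∀ θ1 θ2 : ℝ, (θ1, θ2) ≠ (y1 - lam / 2, y2 + lam / 2) →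
      tvQ lam y1 y2 (y1 - lam / 2) (y2 + lam / 2) < tvQ lam y1 y2 θ1 θ2 := by
  intro θ1 θ2 hne
  have habs : |(y1 - lam / 2) - (y2 + lam / 2)| = y1 - y2 - lam := by
    rw [abs_of_pos (by linarith)]; ring
  have h2 : θ1 - θ2 ≤ |θ1 - θ2| := le_abs_self _
  have h3 : lam * (θ1 - θ2) ≤ lam * |θ1 - θ2| :=
    mul_le_mul_of_nonneg_left h2 hlam.le
  have hcase : θ1 ≠ y1 - lam / 2 ∨ θ2 ≠ y2 + lam / 2 := by
    by_contra h
    push_neg at h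
    exact hne (by simp [h.1, h.2])
  simp only [tvQ, habs]
  rcases hcase with h | h
  · have h' : θ1 - (y1 - lam / 2) ≠ 0 := sub_ne_zero.mpr h
    have : 0 < (θ1 - (y1 - lam / 2)) ^ 2 := by positivity
    nlinarith [sq_nonneg (θ2 - (y2 + lam / 2))]
  · have h' : θ2 - (y2 + lam / 2) ≠ 0 := sub_ne_zero.mpr h
    have : 0 < (θ2 - (y2 + lam / 2)) ^ 2 := by positivity
    nlinarith [sq_nonneg (θ1 - (y1 - lam / 2))]
end

section
/- Suppose y1 ≥ y2 and y1 − y2 ≤ λ. Then (θ1, θ2) = ((y1 + y2)/2, (y1 + y2)/2) is the unique global minimizer over ℝ² of the two-pixel TV objective Q_TV(θ1, θ2) = (y1 − θ1)² + (y2 − θ2)² + λ|θ1 − θ2|. -/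
/-- If `y1 ≥ y2` and `y1 − y2 ≤ λ`, then `((y1+y2)/2, (y1+y2)/2)` is the unique global
minimizer of the two-pixel TV objective `Q_TV`. -/
theorem tv_two_pixel_small_gap_minimizer
    (lam y1 y2 : ℝ) (hlam : 0 < lam)
    (hy : y2 ≤ y1) (hgap : y1 - y2 ≤ lam) :
    ∀ θ1 θ2 : ℝ, (θ1, θ2) ≠ ((y1 + y2) / 2, (y1 + y2) / 2) →
      tvQ lam y1 y2 ((y1 + y2) / 2) ((y1 + y2) / 2) < tvQ lam y1 y2 θ1 θ2 := by
  intro θ1 θ2 hne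
  unfold tvQ
  have h0 : ((y1 + y2) / 2 - (y1 + y2) / 2 : ℝ) = 0 := by ring
  rw [h0, abs_zero, mul_zero]
  by_cases h : θ1 = θ2
  · subst h
    have hm : θ1 ≠ (y1 + y2) / 2 := by
      intro h'; exact hne (by rw [h'])
    have hpos : (θ1 - (y1 + y2) / 2) ^ 2 > 0 := by
      have := sub_ne_zero.mpr hm
      positivity
    rw [sub_self, abs_zero, mul_zero]
    nlinarith [hpos]
  · have hd : θ1 - θ2 ≠ 0 := sub_ne_zero.mpr h
    rcases abs_cases (θ1 - θ2) with ⟨habs, hsign⟩ | ⟨habs, hsign⟩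
    · rw [habs]
      have : θ1 - θ2 > 0 := lt_of_le_of_ne hsign (Ne.symm hd)
      nlinarith [sq_nonneg (y1 - θ1 - (θ2 - y2)), this, hgap, sq_nonneg (θ1 - θ2)]
    · rw [habs]
      have : θ1 - θ2 < 0 := hsign
      nlinarith [sq_nonneg (y1 - θ1 - (θ2 - y2)), this, hy, hlam, sq_nonneg (θ1 - θ2)]
end

section
/- If y1 − y2 > aλ, then Q((y1 + y2)/2, (y1 + y2)/2) = (y1 − y2)²/2 > (a + 1)λ²/2 = Q(y1, y2); in particular, any global minimizer of the two-pixel SCAD objective Q must satisfy θ1 ≠ θ2. -/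
/-- If `y1 − y2 > aλ`, then `Q((y1+y2)/2, (y1+y2)/2) = (y1 − y2)²/2 > (a+1)λ²/2 = Q(y1, y2)`;
in particular any global minimizer of `Q` satisfies `θ1 ≠ θ2`. -/
theorem scad_two_pixel_no_diagonal_min
    (a lam y1 y2 : ℝ) (ha : 2 < a) (hlam : 0 < lam)
    (hgap : a * lam < y1 - y2) :
    scadQ a lam y1 y2 ((y1 + y2) / 2) ((y1 + y2) / 2) = (y1 - y2) ^ 2 / 2 ∧
    (y1 - y2) ^ 2 / 2 > (a + 1) * lam ^ 2 / 2 ∧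
    (a + 1) * lam ^ 2 / 2 = scadQ a lam y1 y2 y1 y2 ∧
    (∀ θ1 θ2 : ℝ, (∀ t1 t2 : ℝ, scadQ a lam y1 y2 θ1 θ2 ≤ scadQ a lam y1 y2 t1 t2) →
        θ1 ≠ θ2) := by
  have hpen0 : scadPen a lam 0 = 0 := by
    simp [scadPen, hlam.le]
  have h1 : scadQ a lam y1 y2 ((y1 + y2) / 2) ((y1 + y2) / 2) = (y1 - y2) ^ 2 / 2 := by
    simp only [scadQ, sub_self, abs_zero, hpen0]
    ring
  have hgap' : lam < y1 - y2 := lt_trans (by nlinarith) hgap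
  have habs : |y1 - y2| = y1 - y2 := abs_of_pos (by linarith)
  have h3 : (a + 1) * lam ^ 2 / 2 = scadQ a lam y1 y2 y1 y2 := by
    simp only [scadQ, sub_self]
    rw [habs]
    rw [scadPen, if_neg (by linarith), if_neg (by linarith)]
    ring
  have h2 : (y1 - y2) ^ 2 / 2 > (a + 1) * lam ^ 2 / 2 := by nlinarith
  refine ⟨h1, h2, h3, ?_⟩
  rintro θ1 θ2 hmin rfl
  have := hmin y1 y2
  rw [← h3] at this
  have hQ : scadQ a lam y1 y2 θ1 θ1 = (y1 - θ1) ^ 2 + (y2 - θ1) ^ 2 := by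
    simp [scadQ, hpen0]
  nlinarith [sq_nonneg (y1 + y2 - 2 * θ1)]
end

section
/- Monotone descent property of the majorization–minimization iteration for the SCAD-penalized functional: let f ∈ ℝ^N, let g_1, …, g_m : ℝ^N → [0, ∞) be arbitrary nonnegative functions, and define F(u) = ‖f − u‖² + Σ_{i=1}^m p_λ(g_i(u)). Fix v ∈ ℝ^N and suppose u' minimizes over u ∈ ℝ^N the surrogate functional G(u) = ‖f − u‖² + Σ_{i=1}^m p'_λ(g_i(v)) · g_i(u). Then F(u') ≤ F(v). -/
lemma scad_major (a lam : ℝ) (ha : 2 < a) (hlam : 0 < lam) (θ θ0 : ℝ)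
    (hθ : 0 ≤ θ) (h0 : 0 ≤ θ0) :
    scadPen a lam θ ≤ scadPen a lam θ0 + scadDeriv a lam θ0 * (θ - θ0) := by
  have ha1 : (0:ℝ) < a - 1 := by linarith
  have hne : a - 1 ≠ 0 := ha1.ne'
  have hD : (0:ℝ) < 2 * (a - 1) := by linarith
  unfold scadPen scadDeriv
  split_ifs with h1 h2 h3 h3 h4 h5 h4 h5
  · nlinarith
  · rw [← sub_nonneg, show (2 * a * lam * θ0 - θ0 ^ 2 - lam ^ 2) / (2 * (a - 1))
        + (a * lam - θ0) / (a - 1) * (θ - θ0) - lam * θ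
        = (θ0 - lam) * (θ0 + lam - 2 * θ) / (2 * (a - 1)) from by field_simp; ring]
    exact div_nonneg (by nlinarith) hD.le
  · nlinarith [mul_le_mul_of_nonneg_left h1 hlam.le]
  · rw [← sub_nonneg, show lam * θ0 + lam * (θ - θ0)
        - (2 * a * lam * θ - θ ^ 2 - lam ^ 2) / (2 * (a - 1))
        = (θ - lam) ^ 2 / (2 * (a - 1)) from by field_simp; ring]
    positivity
  · rw [← sub_nonneg, show (2 * a * lam * θ0 - θ0 ^ 2 - lam ^ 2) / (2 * (a - 1))
        + (a * lam - θ0) / (a - 1) * (θ - θ0)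
        - (2 * a * lam * θ - θ ^ 2 - lam ^ 2) / (2 * (a - 1))
        = (θ - θ0) ^ 2 / (2 * (a - 1)) from by field_simp; ring]
    positivity
  · rw [← sub_nonneg, show (a + 1) * lam ^ 2 / 2 + 0 * (θ - θ0)
        - (2 * a * lam * θ - θ ^ 2 - lam ^ 2) / (2 * (a - 1))
        = (θ - a * lam) ^ 2 / (2 * (a - 1)) from by field_simp; ring]
    positivity
  · nlinarith [mul_lt_mul_of_pos_left (not_le.mp h3) hlam, mul_pos hlam hlam]
  · rw [← sub_nonneg, show (2 * a * lam * θ0 - θ0 ^ 2 - lam ^ 2) / (2 * (a - 1))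
        + (a * lam - θ0) / (a - 1) * (θ - θ0) - (a + 1) * lam ^ 2 / 2
        = (a * lam - θ0) * (2 * θ - θ0 - a * lam) / (2 * (a - 1)) from by field_simp; ring]
    exact div_nonneg (by nlinarith) hD.le
  · linarith

/-- Monotone descent property of the MM iteration for the SCAD-penalized functional:
if `u'` minimizes the surrogate `G(u) = ‖f − u‖² + Σᵢ p'_λ(gᵢ(v)) gᵢ(u)`, then
`F(u') ≤ F(v)` where `F(u) = ‖f − u‖² + Σᵢ p_λ(gᵢ(u))`. -/
theorem scad_mm_descent
    (a lam : ℝ) (ha : 2 < a) (hlam : 0 < lam) (N m : ℕ)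
    (f : EuclideanSpace ℝ (Fin N)) (g : Fin m → EuclideanSpace ℝ (Fin N) → ℝ)
    (hg : ∀ i u, 0 ≤ g i u) (v u' : EuclideanSpace ℝ (Fin N))
    (hmin : ∀ u : EuclideanSpace ℝ (Fin N),
        ‖f - u'‖ ^ 2 + ∑ i, scadDeriv a lam (g i v) * g i u'
          ≤ ‖f - u‖ ^ 2 + ∑ i, scadDeriv a lam (g i v) * g i u) :
    ‖f - u'‖ ^ 2 + ∑ i, scadPen a lam (g i u')
      ≤ ‖f - v‖ ^ 2 + ∑ i, scadPen a lam (g i v) := by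
  have hmaj : ∀ i, scadPen a lam (g i u')
      ≤ scadPen a lam (g i v) + scadDeriv a lam (g i v) * (g i u' - g i v) :=
    fun i => scad_major a lam ha hlam _ _ (hg i u') (hg i v)
  have h1 : ‖f - u'‖ ^ 2 + ∑ i, scadPen a lam (g i u')
      ≤ (‖f - u'‖ ^ 2 + ∑ i, scadDeriv a lam (g i v) * g i u')
        + ∑ i, (scadPen a lam (g i v) - scadDeriv a lam (g i v) * g i v) := by
    have : ∑ i, scadPen a lam (g i u')
        ≤ ∑ i, (scadPen a lam (g i v) + scadDeriv a lam (g i v) * (g i u' - g i v)) :=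
      Finset.sum_le_sum (fun i _ => hmaj i)
    calc ‖f - u'‖ ^ 2 + ∑ i, scadPen a lam (g i u')
        ≤ ‖f - u'‖ ^ 2 + ∑ i, (scadPen a lam (g i v)
            + scadDeriv a lam (g i v) * (g i u' - g i v)) := by linarith
      _ = ‖f - u'‖ ^ 2 + ∑ i, (scadDeriv a lam (g i v) * g i u'
            + (scadPen a lam (g i v) - scadDeriv a lam (g i v) * g i v)) := by
          congr 1; apply Finset.sum_congr rfl; intro i _; ring
      _ = ‖f - u'‖ ^ 2 + ∑ i, scadDeriv a lam (g i v) * g i u'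
            + ∑ i, (scadPen a lam (g i v) - scadDeriv a lam (g i v) * g i v) := by
          rw [Finset.sum_add_distrib]; ring
  have h2 := hmin v
  have h3 : (‖f - v‖ ^ 2 + ∑ i, scadDeriv a lam (g i v) * g i v)
      + ∑ i, (scadPen a lam (g i v) - scadDeriv a lam (g i v) * g i v)
      = ‖f - v‖ ^ 2 + ∑ i, scadPen a lam (g i v) := by
    rw [Finset.sum_sub_distrib]; ring
  linarith
end

section
/- The SCAD penalty shrinks less than the TV penalty at large contrasts: if y1 − y2 > aλ (with a > 2 and aλ > λ), the SCAD minimizer (y1, y2) reproduces the data exactly (zero bias), whereas the TV minimizer (y1 − λ/2, y2 + λ/2) satisfies (θ1 − θ2) = (y1 − y2) − λ < y1 − y2; i.e., the difference of the TV-restored values is strictly smaller than the difference of the data values by exactly λ. -/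
/-- At large contrasts (`y1 − y2 > aλ`): the SCAD minimizer `(y1, y2)` reproduces the data
exactly (zero bias), whereas the TV minimizer `(y1 − λ/2, y2 + λ/2)` has difference
`(y1 − y2) − λ`, strictly smaller than `y1 − y2` by exactly `λ`. -/
theorem scad_vs_tv_bias
    (a lam y1 y2 : ℝ) (ha : 2 < a) (hlam : 0 < lam)
    (hgap : a * lam < y1 - y2) :
    (∀ θ1 θ2 : ℝ, scadQ a lam y1 y2 y1 y2 ≤ scadQ a lam y1 y2 θ1 θ2) ∧
    (∀ θ1 θ2 : ℝ,
        tvQ lam y1 y2 (y1 - lam / 2) (y2 + lam / 2) ≤ tvQ lam y1 y2 θ1 θ2) ∧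
    (y1 - lam / 2) - (y2 + lam / 2) = (y1 - y2) - lam ∧
    (y1 - y2) - lam < y1 - y2 := by
  have hal : lam < a * lam := by nlinarith
  have hs : a * lam < y1 - y2 := hgap
  have habs : |y1 - y2| = y1 - y2 := abs_of_pos (by nlinarith)
  refine ⟨?_, ?_, by ring, by linarith⟩
  · intro θ1 θ2
    have hd0 : (0:ℝ) ≤ |θ1 - θ2| := abs_nonneg _
    have hdl : θ1 - θ2 ≤ |θ1 - θ2| := le_abs_self _
    unfold scadQ scadPen
    rw [habs, if_neg (by linarith), if_neg (by linarith)]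
    set d := |θ1 - θ2| with hdd
    split_ifs with h1 h2
    · nlinarith [mul_nonneg hlam.le (sub_nonneg.2 hdl),
        mul_nonneg (show (0:ℝ) ≤ lam - (θ1-θ2) by linarith)
          (show (0:ℝ) ≤ (2*a-3)*lam - (θ1-θ2) by nlinarith),
        mul_nonneg (mul_nonneg (show (0:ℝ) ≤ a-2 by linarith)
          (show (0:ℝ) ≤ a-1 by linarith)) (sq_nonneg lam),
        sq_nonneg (y1 + y2 - θ1 - θ2),
        mul_nonneg (show (0:ℝ) ≤ y1 - y2 - a*lam by linarith)
          (show (0:ℝ) ≤ y1 - y2 + a*lam - 2*(θ1-θ2) by nlinarith)]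
    · rw [← sub_le_iff_le_add', le_div_iff₀ (by linarith : (0:ℝ) < 2*(a-1))]
      nlinarith [sq_nonneg (y1 + y2 - θ1 - θ2),
        mul_nonneg (show (0:ℝ) ≤ a - 2 by linarith) (sq_nonneg (a*lam - d)),
        mul_nonneg (show (0:ℝ) ≤ a - 1 by linarith) (sq_nonneg (y1 + y2 - θ1 - θ2)),
        mul_nonneg (show (0:ℝ) ≤ y1 - y2 - a*lam by linarith)
          (show (0:ℝ) ≤ y1 - y2 + a*lam - 2*d by nlinarith),
        mul_nonneg (show (0:ℝ) ≤ d - (θ1-θ2) by linarith)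
          (show (0:ℝ) ≤ 2*(y1-y2) - (θ1-θ2) - d by nlinarith)]
    · nlinarith [sq_nonneg (y1 - θ1), sq_nonneg (y2 - θ2)]
  · intro θ1 θ2
    have hdl : θ1 - θ2 ≤ |θ1 - θ2| := le_abs_self _
    unfold tvQ
    have habs2 : |y1 - lam / 2 - (y2 + lam / 2)| = y1 - y2 - lam := by
      rw [abs_of_pos (by nlinarith)]; ring
    rw [habs2]
    nlinarith [sq_nonneg (y1 + y2 - θ1 - θ2), sq_nonneg (y1 - y2 - (θ1 - θ2) - lam),
      mul_nonneg hlam.le (sub_nonneg.2 hdl)]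
end
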